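/- For all terms u and v, the inequation u ≤ v holds in all algebras of binary relations (i.e., for every set S and every interpretation σ of variables as binary relations on S, σ̂(u) ⊆ σ̂(v)) if and only if there exists a graph homomorphism from G(v) to G(u). -/

import Mathlib

/-- A 2-pointed labelled directed graph over label set `X`:
a finite vertex type, a set of labelled edges, and distinguished
input and output vertices. -/
structure PGraph (X : Type) where
  V : Type
  fin : Finite V
  E : Set (V × X × V)
  inp : V
  out : V

/-- A graph homomorphism preserves the input, the output, and labelled edges. -/
def IsHom {X : Type} (G H : PGraph X) (φ : G.V → H.V) : Prop :=
  φ G.inp = H.inp ∧ φ G.out = H.out ∧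
    ∀ p a q, (p, a, q) ∈ G.E → (φ p, a, φ q) ∈ H.E

/-- `gle G G'` (written `G ≲ G'`) iff there is a homomorphism from `G'` to `G`. -/
def gle {X : Type} (G G' : PGraph X) : Prop := ∃ φ : G'.V → G.V, IsHom G' G φ

/-- Graph of a variable: two vertices, one labelled edge from input to output. -/
def gvar {X : Type} (a : X) : PGraph X :=
  ⟨Bool, inferInstance, {(false, a, true)}, false, true⟩

/-- Graph of `1`: one vertex, no edges. -/
def gone {X : Type} : PGraph X := ⟨Unit, inferInstance, ∅, (), ()⟩

/-- Graph of `⊤`: two isolated vertices. -/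
def gtop {X : Type} : PGraph X := ⟨Bool, inferInstance, ∅, false, true⟩

/-- Converse of a graph: swap input and output. -/
def gconv {X : Type} (G : PGraph X) : PGraph X := ⟨G.V, G.fin, G.E, G.out, G.inp⟩

/-- Series composition: merge the output of `G` with the input of `H`. -/
def gseq {X : Type} (G H : PGraph X) : PGraph X :=
  let r : G.V ⊕ H.V → G.V ⊕ H.V → Prop :=
    fun x y => x = Sum.inl G.out ∧ y = Sum.inr H.inp
  { V := Quot r
    fin := by
      have := G.fin; have := H.fin
      exact Finite.of_surjective (Quot.mk r) (fun q => Quot.exists_rep q)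
    E := { e | (∃ p a q, (p, a, q) ∈ G.E ∧
                  e = (Quot.mk r (.inl p), a, Quot.mk r (.inl q)))
             ∨ (∃ p a q, (p, a, q) ∈ H.E ∧
                  e = (Quot.mk r (.inr p), a, Quot.mk r (.inr q))) }
    inp := Quot.mk r (.inl G.inp)
    out := Quot.mk r (.inr H.out) }

/-- Parallel composition: merge the inputs and merge the outputs. -/
def gpar {X : Type} (G H : PGraph X) : PGraph X :=
  let r : G.V ⊕ H.V → G.V ⊕ H.V → Prop :=
    fun x y => (x = Sum.inl G.inp ∧ y = Sum.inr H.inp) ∨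
               (x = Sum.inl G.out ∧ y = Sum.inr H.out)
  { V := Quot r
    fin := by
      have := G.fin; have := H.fin
      exact Finite.of_surjective (Quot.mk r) (fun q => Quot.exists_rep q)
    E := { e | (∃ p a q, (p, a, q) ∈ G.E ∧
                  e = (Quot.mk r (.inl p), a, Quot.mk r (.inl q)))
             ∨ (∃ p a q, (p, a, q) ∈ H.E ∧
                  e = (Quot.mk r (.inr p), a, Quot.mk r (.inr q))) }
    inp := Quot.mk r (.inl G.inp)
    out := Quot.mk r (.inl G.out) }

/-- Terms: variables, composition, intersection, converse, `1` and `⊤`. -/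
inductive Trm (X : Type) : Type
  | var : X → Trm X
  | comp : Trm X → Trm X → Trm X
  | inter : Trm X → Trm X → Trm X
  | conv : Trm X → Trm X
  | one : Trm X
  | top : Trm X

/-- The graph of a term. -/
def grOf {X : Type} : Trm X → PGraph X
  | .var a => gvar a
  | .comp u v => gseq (grOf u) (grOf v)
  | .inter u v => gpar (grOf u) (grOf v)
  | .conv u => gconv (grOf u)
  | .one => gone
  | .top => gtop

/-- Relational interpretation of a term, given an interpretation `σ`
of the variables as binary relations on `S`. -/
def interp {X S : Type} (σ : X → S → S → Prop) : Trm X → S → S → Prop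
  | .var a => σ a
  | .comp u v => fun i j => ∃ k, interp σ u i k ∧ interp σ v k j
  | .inter u v => fun i j => interp σ u i j ∧ interp σ v i j
  | .conv u => fun i j => interp σ u j i
  | .one => fun i j => i = j
  | .top => fun _ _ => True

/-- Evaluation of a graph: there is a labelling of the vertices by elements of `S`
sending input to `i`, output to `j`, and making every edge true under `σ`. -/
def evalG {X S : Type} (G : PGraph X) (σ : X → S → S → Prop) (i j : S) : Prop :=
  ∃ ρ : G.V → S, ρ G.inp = i ∧ ρ G.out = j ∧
    ∀ p a q, (p, a, q) ∈ G.E → σ a (ρ p) (ρ q)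

theorem interp_iff_evalG {X S : Type} (σ : X → S → S → Prop) (u : Trm X) (i j : S) :
    interp σ u i j ↔ evalG (grOf u) σ i j := by
  induction u generalizing i j with
  | var a =>
    constructor
    · intro h
      refine ⟨fun b : Bool => if b then j else i, rfl, rfl, ?_⟩
      rintro p b q hpq
      simp only [grOf, gvar, Set.mem_singleton_iff, Prod.mk.injEq] at hpq
      obtain ⟨rfl, rfl, rfl⟩ := hpq
      simpa [interp] using h
    · rintro ⟨ρ, hi, ho, he⟩
      have := he false a true rfl
      simp only [grOf, gvar] at hi ho
      rw [hi, ho] at this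
      exact this
  | comp u v ihu ihv =>
    constructor
    · rintro ⟨k, hu, hv⟩
      obtain ⟨ρ₁, h1i, h1o, h1e⟩ := (ihu i k).mp hu
      obtain ⟨ρ₂, h2i, h2o, h2e⟩ := (ihv k j).mp hv
      refine ⟨Quot.lift (Sum.elim ρ₁ ρ₂) ?_, ?_, ?_, ?_⟩
      · rintro x y ⟨rfl, rfl⟩; simp [h1o, h2i]
      · exact h1i
      · exact h2o
      · rintro p a q (⟨p', a', q', h, heq⟩ | ⟨p', a', q', h, heq⟩) <;>
          cases heq
        · exact h1e _ _ _ h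
        · exact h2e _ _ _ h
    · rintro ⟨ρ, hi, ho, he⟩
      refine ⟨ρ (Quot.mk _ (Sum.inl (grOf u).out)), (ihu _ _).mpr ?_, (ihv _ _).mpr ?_⟩
      · exact ⟨fun x => ρ (Quot.mk _ (Sum.inl x)), hi, rfl,
          fun p a q h => he _ _ _ (Or.inl ⟨p, a, q, h, rfl⟩)⟩
      · refine ⟨fun x => ρ (Quot.mk _ (Sum.inr x)), ?_, ho,
          fun p a q h => he _ _ _ (Or.inr ⟨p, a, q, h, rfl⟩)⟩
        exact congrArg ρ (Quot.sound ⟨rfl, rfl⟩).symm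
  | inter u v ihu ihv =>
    constructor
    · rintro ⟨hu, hv⟩
      obtain ⟨ρ₁, h1i, h1o, h1e⟩ := (ihu i j).mp hu
      obtain ⟨ρ₂, h2i, h2o, h2e⟩ := (ihv i j).mp hv
      refine ⟨Quot.lift (Sum.elim ρ₁ ρ₂) ?_, ?_, ?_, ?_⟩
      · rintro x y (⟨rfl, rfl⟩ | ⟨rfl, rfl⟩) <;> simp [h1i, h2i, h1o, h2o]
      · exact h1i
      · exact h1o
      · rintro p a q (⟨p', a', q', h, heq⟩ | ⟨p', a', q', h, heq⟩) <;>
          cases heq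
        · exact h1e _ _ _ h
        · exact h2e _ _ _ h
    · rintro ⟨ρ, hi, ho, he⟩
      constructor
      · exact (ihu _ _).mpr ⟨fun x => ρ (Quot.mk _ (Sum.inl x)), hi, ho,
          fun p a q h => he _ _ _ (Or.inl ⟨p, a, q, h, rfl⟩)⟩
      · refine (ihv _ _).mpr ⟨fun x => ρ (Quot.mk _ (Sum.inr x)), ?_, ?_,
          fun p a q h => he _ _ _ (Or.inr ⟨p, a, q, h, rfl⟩)⟩
        · exact (congrArg ρ (Quot.sound (Or.inl ⟨rfl, rfl⟩))).symm.trans hi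
        · exact (congrArg ρ (Quot.sound (Or.inr ⟨rfl, rfl⟩))).symm.trans ho
  | conv u ihu =>
    constructor
    · intro h
      obtain ⟨ρ, hi, ho, he⟩ := (ihu j i).mp h
      exact ⟨ρ, ho, hi, he⟩
    · rintro ⟨ρ, hi, ho, he⟩
      exact (ihu j i).mpr ⟨ρ, ho, hi, he⟩
  | one =>
    constructor
    · rintro rfl
      exact ⟨fun _ => i, rfl, rfl, fun p a q h => h.elim⟩
    · rintro ⟨ρ, hi, ho, _⟩
      exact hi.symm.trans ho
  | top =>
    constructor
    · intro _
      exact ⟨fun b : Bool => if b then j else i, rfl, rfl, fun p a q h => h.elim⟩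
    · intro _; trivial

/-- `u ≤ v` is valid in all algebras of binary relations iff there is a
graph homomorphism from `G(v)` to `G(u)`. -/
theorem rel_le_iff_hom {X : Type} (u v : Trm X) :
    (∀ (S : Type) (σ : X → S → S → Prop) (i j : S), interp σ u i j → interp σ v i j) ↔
      ∃ φ : (grOf v).V → (grOf u).V, IsHom (grOf v) (grOf u) φ := by
  constructor
  · intro h
    have hu : interp (fun a p q => (p, a, q) ∈ (grOf u).E) u (grOf u).inp (grOf u).out :=
      (interp_iff_evalG _ u _ _).mpr ⟨id, rfl, rfl, fun _ _ _ h => h⟩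
    obtain ⟨ρ, hi, ho, he⟩ := (interp_iff_evalG _ v _ _).mp (h _ _ _ _ hu)
    exact ⟨ρ, hi, ho, he⟩
  · rintro ⟨φ, hφi, hφo, hφe⟩ S σ i j h
    obtain ⟨ρ, hi, ho, he⟩ := (interp_iff_evalG σ u i j).mp h
    exact (interp_iff_evalG σ v i j).mpr ⟨ρ ∘ φ,
      by simp [Function.comp, hφi, hi], by simp [Function.comp, hφo, ho],
      fun p a q hpq => he _ _ _ (hφe p a q hpq)⟩
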